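/- Let D be a diagram in which all boxes of positive rank lie in a single column j, and each such box has rank exactly 1. Then for each k = 0, 1, ..., rank(D) there is exactly one diagram C ≤ D with rank(C) = k; in particular the number of diagrams C ≤ D equals rank(D) + 1. -/

import Mathlib

open Finset

/-- `colLE R S`: `R ≤ S` for columns, i.e. `|R| = |S|` and the `k`-th least element of `R`
does not exceed the `k`-th least element of `S` for each `k`. -/
def colLE {α : Type*} [LinearOrder α] (R S : Finset α) : Prop :=
  R.card = S.card ∧
  ∀ (k : ℕ) (hR : k < (R.sort (· ≤ ·)).length) (hS : k < (S.sort (· ≤ ·)).length),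
    (R.sort (· ≤ ·)).get ⟨k, hR⟩ ≤ (S.sort (· ≤ ·)).get ⟨k, hS⟩

/-- Rank of a single column `S ⊆ [n] = {1,…,n}`:
`Σ_{i ∈ S} #{k : 1 ≤ k ≤ i, k ∉ S}`. -/
def colRank (S : Finset ℕ) : ℕ :=
  ∑ i ∈ S, ((Finset.Icc 1 i).filter (fun k => k ∉ S)).card

/-- Columnwise order on diagrams. -/
def diagLE {n : ℕ} (C D : Fin n → Finset ℕ) : Prop := ∀ j, colLE (C j) (D j)

/-- Strict columnwise order on diagrams. -/
def diagLT {n : ℕ} (C D : Fin n → Finset ℕ) : Prop := diagLE C D ∧ C ≠ D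

/-- Rank of a diagram: sum of the ranks of its columns. -/
def diagRank {n : ℕ} (D : Fin n → Finset ℕ) : ℕ := ∑ j, colRank (D j)

/-- The monomial `x^C`, as the exponent function recording for each row `i`
the number of boxes of `C` in row `i`. -/
def xMon {n : ℕ} (C : Fin n → Finset ℕ) : ℕ → ℕ :=
  fun i => (Finset.univ.filter (fun j => i ∈ C j)).card

/-! ### Auxiliary lemmas -/

section Aux

/-- `colLE` is reflexive. -/
lemma colLE_refl (S : Finset ℕ) : colLE S S := ⟨rfl, fun _ _ _ => le_refl _⟩

lemma get_sort_mem (S : Finset ℕ) {k : ℕ} (h : k < (S.sort (· ≤ ·)).length) :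
    (S.sort (· ≤ ·)).get ⟨k, h⟩ ∈ S :=
  (Finset.mem_sort (· ≤ ·)).mp (List.get_mem _ _)


lemma sort_strictMono (S : Finset ℕ) : StrictMono (S.sort (· ≤ ·)).get :=
  (Finset.sortedLT_sort S).strictMono_get

/-- In a set of positive naturals, the `k`-th least element is at least `k+1`. -/
lemma succ_le_get_sort (S : Finset ℕ) (hS : ∀ x ∈ S, 1 ≤ x) :
    ∀ (k : ℕ) (h : k < (S.sort (· ≤ ·)).length), k + 1 ≤ (S.sort (· ≤ ·)).get ⟨k, h⟩ := by
  intro k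
  induction k with
  | zero => intro h; exact hS _ (get_sort_mem S h)
  | succ k ih =>
    intro h
    have hk : k < (S.sort (· ≤ ·)).length := Nat.lt_of_succ_lt h
    have h1 := ih hk
    have h2 := sort_strictMono S (show (⟨k, hk⟩ : Fin _) < ⟨k + 1, h⟩ from Nat.lt_succ_self k)
    omega

lemma filter_le_get_card (S : Finset ℕ) {k : ℕ} (h : k < (S.sort (· ≤ ·)).length) :
    (S.filter (· ≤ (S.sort (· ≤ ·)).get ⟨k, h⟩)).card = k + 1 := by
  have hnd : (S.sort (· ≤ ·)).Nodup := S.sort_nodup (· ≤ ·)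
  have hset : S.filter (· ≤ (S.sort (· ≤ ·)).get ⟨k, h⟩)
      = ((S.sort (· ≤ ·)).take (k + 1)).toFinset := by
    ext x
    simp only [Finset.mem_filter, List.mem_toFinset]
    constructor
    · rintro ⟨hxS, hxle⟩
      have hxl : x ∈ S.sort (· ≤ ·) := (Finset.mem_sort (· ≤ ·)).mpr hxS
      obtain ⟨j, rfl⟩ := List.mem_iff_get.mp hxl
      have hjk : (j : ℕ) ≤ k := by
        by_contra hcon
        have hlt := sort_strictMono S (show (⟨k, h⟩ : Fin _) < j from Nat.lt_of_not_le hcon)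
        exact absurd hxle (not_le.mpr hlt)
      have hjlt : (j : ℕ) < ((S.sort (· ≤ ·)).take (k + 1)).length := by
        simp only [List.length_take]
        have := j.2; omega
      have hgt : ((S.sort (· ≤ ·)).take (k + 1)).get ⟨j, hjlt⟩ = (S.sort (· ≤ ·)).get j := by
        simp [List.getElem_take]
      rw [← hgt]
      exact List.get_mem _ _
    · intro hx
      have hxl : x ∈ S.sort (· ≤ ·) := List.mem_of_mem_take hx
      refine ⟨(Finset.mem_sort (· ≤ ·)).mp hxl, ?_⟩
      obtain ⟨j, rfl⟩ := List.mem_iff_get.mp hx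
      have hjlen : (j : ℕ) < (S.sort (· ≤ ·)).length := by
        have := j.2; simp only [List.length_take] at this; omega
      have hget : ((S.sort (· ≤ ·)).take (k + 1)).get j = (S.sort (· ≤ ·)).get ⟨j, hjlen⟩ := by
        simp [List.getElem_take]
      rw [hget]
      have hjk : (j : ℕ) ≤ k := by have := j.2; simp only [List.length_take] at this; omega
      rcases lt_or_eq_of_le hjk with hlt | heq
      · exact le_of_lt (sort_strictMono S (show (⟨(j : ℕ), hjlen⟩ : Fin _) < ⟨k, h⟩ from hlt))
      · have : (⟨(j : ℕ), hjlen⟩ : Fin _) = ⟨k, h⟩ := by exact Fin.ext heq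
        rw [this]
  rw [hset, List.toFinset_card_of_nodup (hnd.sublist (List.take_sublist _ _)),
    List.length_take]
  omega

/-- The rank of the `k`-th least element of `S` equals the defect `s_k - (k+1)`. -/
lemma boxRank_get (S : Finset ℕ) (hS : ∀ x ∈ S, 1 ≤ x) {k : ℕ}
    (h : k < (S.sort (· ≤ ·)).length) :
    ((Finset.Icc 1 ((S.sort (· ≤ ·)).get ⟨k, h⟩)).filter (fun x => x ∉ S)).card
      = (S.sort (· ≤ ·)).get ⟨k, h⟩ - (k + 1) := by
  set a := (S.sort (· ≤ ·)).get ⟨k, h⟩ with ha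
  have ha1 : 1 ≤ a := succ_le_get_sort S hS k h |>.trans' (by omega)
  have hIcc : (Finset.Icc 1 a).filter (fun x => x ∈ S) = S.filter (· ≤ a) := by
    ext x
    simp only [Finset.mem_filter, Finset.mem_Icc]
    exact ⟨fun ⟨⟨_, h2⟩, h3⟩ => ⟨h3, h2⟩, fun ⟨h3, h2⟩ => ⟨⟨hS x h3, h2⟩, h3⟩⟩
  have hsum : ((Finset.Icc 1 a).filter (fun x => x ∈ S)).card
      + ((Finset.Icc 1 a).filter (fun x => x ∉ S)).card = (Finset.Icc 1 a).card :=
    Finset.card_filter_add_card_filter_not (fun x => x ∈ S)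
  have hcard : (Finset.Icc 1 a).card = a := by rw [Nat.card_Icc]; omega
  have hk1 := filter_le_get_card S h
  rw [← ha] at hk1
  rw [hIcc, hk1, hcard] at hsum
  have hle : k + 1 ≤ a := succ_le_get_sort S hS k h
  omega

/-- Column rank as the sum of defects of the sorted list. -/
lemma colRank_eq_sum (S : Finset ℕ) (hS : ∀ x ∈ S, 1 ≤ x) :
    colRank S = ∑ k ∈ Finset.range (S.sort (· ≤ ·)).length,
      ((S.sort (· ≤ ·)).getD k 0 - (k + 1)) := by
  classical
  set l := S.sort (· ≤ ·) with hl
  have h1 : colRank S = (S.toList.map (fun i => ((Finset.Icc 1 i).filter (fun x => x ∉ S)).card)).sum := by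
    rw [Finset.sum_map_toList]; rfl
  have h2 : (S.toList.map (fun i => ((Finset.Icc 1 i).filter (fun x => x ∉ S)).card)).sum
      = (l.map (fun i => ((Finset.Icc 1 i).filter (fun x => x ∉ S)).card)).sum :=
    (((S.sort_perm_toList (· ≤ ·)).map _).sum_eq).symm
  rw [h1, h2, ← Fin.sum_univ_fun_getElem]
  rw [← Fin.sum_univ_eq_sum_range (fun k => l.getD k 0 - (k + 1)) l.length]
  apply Finset.sum_congr rfl
  intro i _
  have hi : (i : ℕ) < l.length := i.2
  rw [List.getD_eq_getElem l 0 hi]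
  have := boxRank_get S hS hi
  simpa using this

/-- Pointwise monotonicity from adjacent monotonicity. -/
lemma mono_of_adj {m : ℕ} (e : ℕ → ℕ) (hm : ∀ k, k + 1 < m → e k ≤ e (k + 1)) :
    ∀ i j, i ≤ j → j < m → e i ≤ e j := by
  intro i j hij hj
  induction j with
  | zero => have : i = 0 := Nat.le_zero.mp hij; rw [this]
  | succ j ih =>
    rcases Nat.lt_succ_iff_lt_or_eq.mp (Nat.lt_succ_of_le hij) with hlt | heq
    · exact le_trans (ih (by omega) (by omega)) (hm j hj)
    · rw [heq]

/-- A `{0,1}`-valued monotone sequence on `range m` is determined by its sum. -/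
lemma mono01 {m : ℕ} (e : ℕ → ℕ) (h1 : ∀ k < m, e k ≤ 1)
    (hm : ∀ j k, j ≤ k → k < m → e j ≤ e k) {k : ℕ} (hk : k < m) :
    e k = if k < m - (∑ j ∈ Finset.range m, e j) then 0 else 1 := by
  set t := ∑ j ∈ Finset.range m, e j with ht
  by_cases he : e k = 0
  · have hsplit : ∑ j ∈ Finset.range m, e j
        = ∑ j ∈ Finset.range (k + 1), e j + ∑ j ∈ Finset.Ico (k + 1) m, e j := by
      rw [Finset.range_eq_Ico, ← Finset.sum_Ico_consecutive _ (Nat.zero_le (k + 1)) hk, ← Finset.range_eq_Ico]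
    have h0 : ∑ j ∈ Finset.range (k + 1), e j = 0 :=
      Finset.sum_eq_zero fun j hj => by
        have hj' : j ≤ k := by simp at hj; omega
        have := hm j k hj' hk; omega
    have hb : ∑ j ∈ Finset.Ico (k + 1) m, e j ≤ ∑ j ∈ Finset.Ico (k + 1) m, 1 :=
      Finset.sum_le_sum fun j hj => h1 j (Finset.mem_Ico.mp hj).2
    simp only [Finset.sum_const, Nat.card_Ico, smul_eq_mul, mul_one] at hb
    have htle : t ≤ m - (k + 1) := by omega
    rw [if_pos (by omega)]
    exact he
  · have he1 : e k = 1 := by have := h1 k hk; omega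
    have hsplit : ∑ j ∈ Finset.range m, e j
        = ∑ j ∈ Finset.range k, e j + ∑ j ∈ Finset.Ico k m, e j := by
      rw [Finset.range_eq_Ico, ← Finset.sum_Ico_consecutive _ (Nat.zero_le k) (le_of_lt hk), ← Finset.range_eq_Ico]
    have hb : ∑ j ∈ Finset.Ico k m, 1 ≤ ∑ j ∈ Finset.Ico k m, e j :=
      Finset.sum_le_sum fun j hj => by
        have := hm k j (Finset.mem_Ico.mp hj).1 (Finset.mem_Ico.mp hj).2; omega
    simp only [Finset.sum_const, Nat.card_Ico, smul_eq_mul, mul_one] at hb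
    have : m - k ≤ t := by omega
    rw [if_neg (by omega)]
    exact he1

/-- Monotone comparison of column ranks. -/
lemma colRank_le_of_colLE (S C : Finset ℕ) (hS : ∀ x ∈ S, 1 ≤ x) (hC : ∀ x ∈ C, 1 ≤ x)
    (hle : colLE C S) : colRank C ≤ colRank S := by
  rw [colRank_eq_sum S hS, colRank_eq_sum C hC]
  have hlen : (C.sort (· ≤ ·)).length = (S.sort (· ≤ ·)).length := by
    simp [Finset.length_sort, hle.1]
  rw [hlen]
  apply Finset.sum_le_sum
  intro k hk
  have hkS : k < (S.sort (· ≤ ·)).length := Finset.mem_range.mp hk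
  have hkC : k < (C.sort (· ≤ ·)).length := by omega
  have hgoal : (C.sort (· ≤ ·)).getD k 0 ≤ (S.sort (· ≤ ·)).getD k 0 := by
    rw [List.getD_eq_getElem _ 0 hkS, List.getD_eq_getElem _ 0 hkC]
    simpa using hle.2 k hkC hkS
  exact Nat.sub_le_sub_right hgoal _

/-- A column dominated by a column of rank zero is equal to it. -/
lemma eq_of_colLE_rank_zero (S C : Finset ℕ) (hS : ∀ x ∈ S, 1 ≤ x) (hC : ∀ x ∈ C, 1 ≤ x)
    (hle : colLE C S) (h0 : colRank S = 0) : C = S := by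
  have hlen : (C.sort (· ≤ ·)).length = (S.sort (· ≤ ·)).length := by
    simp [Finset.length_sort, hle.1]
  have hsort : C.sort (· ≤ ·) = S.sort (· ≤ ·) := by
    apply List.ext_get hlen
    intro k hkC hkS
    have hSd : (S.sort (· ≤ ·))[k] - (k + 1) = 0 := by
      have h6 := colRank_eq_sum S hS
      rw [h0] at h6
      have hz := (Finset.sum_eq_zero_iff.mp h6.symm) k (Finset.mem_range.mpr hkS)
      rwa [List.getD_eq_getElem _ 0 hkS] at hz
    have hS1 : k + 1 ≤ (S.sort (· ≤ ·))[k] := by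
      have := succ_le_get_sort S hS k hkS; simpa using this
    have hC1 : k + 1 ≤ (C.sort (· ≤ ·))[k] := by
      have := succ_le_get_sort C hC k hkC; simpa using this
    have hle2 : (C.sort (· ≤ ·))[k] ≤ (S.sort (· ≤ ·))[k] := by
      have := hle.2 k hkC hkS; simpa using this
    simp only [List.get_eq_getElem]
    omega
  have h1 := Finset.sort_toFinset C (· ≤ ·)
  rw [hsort, Finset.sort_toFinset] at h1
  exact h1.symm

/-- Classification: if every box of `S` has rank at most 1, a column `C ≤ S` has its sorted
list determined by its cardinality and rank. -/
lemma get_eq_of_colLE (S C : Finset ℕ) (hS : ∀ x ∈ S, 1 ≤ x) (hC : ∀ x ∈ C, 1 ≤ x)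
    (hle : colLE C S)
    (hd1 : ∀ (k : ℕ) (h : k < (S.sort (· ≤ ·)).length),
      (S.sort (· ≤ ·)).get ⟨k, h⟩ - (k + 1) ≤ 1)
    {k : ℕ} (h : k < (C.sort (· ≤ ·)).length) :
    (C.sort (· ≤ ·)).get ⟨k, h⟩
      = k + 1 + (if k < (C.sort (· ≤ ·)).length - colRank C then 0 else 1) := by
  have hlen : (C.sort (· ≤ ·)).length = (S.sort (· ≤ ·)).length := by
    simp [Finset.length_sort, hle.1]
  set e : ℕ → ℕ := fun j => (C.sort (· ≤ ·)).getD j 0 - (j + 1) with he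
  have h1 : ∀ j < (C.sort (· ≤ ·)).length, e j ≤ 1 := by
    intro j hj
    have hjS : j < (S.sort (· ≤ ·)).length := by omega
    have hbound : (C.sort (· ≤ ·))[j] ≤ (S.sort (· ≤ ·))[j] := by
      simpa using hle.2 j hj hjS
    have hd : (S.sort (· ≤ ·))[j] - (j + 1) ≤ 1 := by simpa using hd1 j hjS
    simp only [he, List.getD_eq_getElem _ 0 hj]
    omega
  have hmono : ∀ i j, i ≤ j → j < (C.sort (· ≤ ·)).length → e i ≤ e j := by
    apply mono_of_adj
    intro i hi1
    have hi : i < (C.sort (· ≤ ·)).length := by omega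
    have hs : (C.sort (· ≤ ·))[i] < (C.sort (· ≤ ·))[i + 1] := by
      simpa using sort_strictMono C (show (⟨i, hi⟩ : Fin _) < ⟨i + 1, hi1⟩ from by
        simp [Fin.lt_def])
    simp only [he, List.getD_eq_getElem _ 0 hi, List.getD_eq_getElem _ 0 hi1]
    omega
  have hsum : ∑ j ∈ Finset.range (C.sort (· ≤ ·)).length, e j = colRank C :=
    (colRank_eq_sum C hC).symm
  have hek := mono01 e h1 hmono h
  rw [hsum] at hek
  simp only [he, List.getD_eq_getElem _ 0 h] at hek
  have hkb : k + 1 ≤ (C.sort (· ≤ ·))[k] := by simpa using succ_le_get_sort C hC k h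
  simp only [List.get_eq_getElem]
  split_ifs at hek ⊢ with h' <;> omega

/-- Uniqueness: two columns dominated by `S` with equal cardinality and rank coincide. -/
lemma col_unique (S C C' : Finset ℕ) (hS : ∀ x ∈ S, 1 ≤ x) (hC : ∀ x ∈ C, 1 ≤ x)
    (hC' : ∀ x ∈ C', 1 ≤ x) (hle : colLE C S) (hle' : colLE C' S)
    (hd1 : ∀ (k : ℕ) (h : k < (S.sort (· ≤ ·)).length),
      (S.sort (· ≤ ·)).get ⟨k, h⟩ - (k + 1) ≤ 1)
    (hr : colRank C = colRank C') : C = C' := by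
  have hlen : (C.sort (· ≤ ·)).length = (C'.sort (· ≤ ·)).length := by
    simp [Finset.length_sort, hle.1, hle'.1]
  have hsort : C.sort (· ≤ ·) = C'.sort (· ≤ ·) := by
    apply List.ext_get hlen
    intro k hk hk'
    have e1 := get_eq_of_colLE S C hS hC hle hd1 hk
    have e2 := get_eq_of_colLE S C' hS hC' hle' hd1 hk'
    simp only [List.get_eq_getElem] at e1 e2 ⊢
    rw [e1, e2, hlen, hr]
  have h1 := Finset.sort_toFinset C (· ≤ ·)
  rw [hsort, Finset.sort_toFinset] at h1
  exact h1.symm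

/-- The canonical column with `m` boxes of which the top `t` have rank 1. -/
def eList (m t : ℕ) : List ℕ :=
  (List.range m).map (fun k => if k < m - t then k + 1 else k + 2)

lemma eList_sorted (m t : ℕ) : (eList m t).Pairwise (· < ·) := by
  apply List.Pairwise.map _ _ (List.pairwise_lt_range (n := m))
  intro a b hab
  split_ifs <;> omega

lemma eList_sort (m t : ℕ) : (eList m t).toFinset.sort (· ≤ ·) = eList m t :=
  (List.toFinset_sort (· ≤ ·) (eList_sorted m t).nodup).mpr ((eList_sorted m t).imp le_of_lt)

lemma eList_length (m t : ℕ) : (eList m t).length = m := by simp [eList]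

lemma eList_getElem (m t : ℕ) {k : ℕ} (h : k < (eList m t).length) :
    (eList m t)[k] = if k < m - t then k + 1 else k + 2 := by
  have hk : k < m := by simpa [eList_length] using h
  simp [eList, hk]

lemma eList_pos (m t : ℕ) : ∀ x ∈ (eList m t).toFinset, 1 ≤ x := by
  intro x hx
  simp only [List.mem_toFinset, eList, List.mem_map, List.mem_range] at hx
  obtain ⟨k, _, rfl⟩ := hx
  split_ifs <;> omega

lemma eList_card (m t : ℕ) : (eList m t).toFinset.card = m := by
  rw [← Finset.length_sort (· ≤ ·), eList_sort, eList_length]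

lemma eList_colRank (m t : ℕ) (ht : t ≤ m) : colRank (eList m t).toFinset = t := by
  rw [colRank_eq_sum _ (eList_pos m t), eList_sort, eList_length]
  have hterm : ∀ k ∈ Finset.range m, (eList m t).getD k 0 - (k + 1)
      = if k < m - t then 0 else 1 := by
    intro k hk
    have hk' : k < (eList m t).length := by rw [eList_length]; exact Finset.mem_range.mp hk
    rw [List.getD_eq_getElem _ 0 hk', eList_getElem m t hk']
    split_ifs <;> omega
  rw [Finset.sum_congr rfl hterm]
  rw [Finset.range_eq_Ico, ← Finset.sum_Ico_consecutive _ (Nat.zero_le (m - t)) (by omega)]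
  rw [← Finset.range_eq_Ico]
  have h1 : ∑ k ∈ Finset.range (m - t), (if k < m - t then (0 : ℕ) else 1) = 0 :=
    Finset.sum_eq_zero fun k hk => if_pos (Finset.mem_range.mp hk)
  have h2 : ∑ k ∈ Finset.Ico (m - t) m, (if k < m - t then (0 : ℕ) else 1)
      = ∑ k ∈ Finset.Ico (m - t) m, 1 :=
    Finset.sum_congr rfl fun k hk => if_neg (by have := (Finset.mem_Ico.mp hk).1; omega)
  rw [h1, h2]
  simp only [Finset.sum_const, Nat.card_Ico, smul_eq_mul, mul_one]
  omega

/-- Existence: the canonical column is dominated by any rank-≤1 column of the right shape. -/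
lemma eList_colLE (S : Finset ℕ) (hS : ∀ x ∈ S, 1 ≤ x)
    (hd1 : ∀ (k : ℕ) (h : k < (S.sort (· ≤ ·)).length),
      (S.sort (· ≤ ·)).get ⟨k, h⟩ - (k + 1) ≤ 1)
    {t : ℕ} (ht : t ≤ colRank S) : colLE (eList S.card t).toFinset S := by
  have hlenS : (S.sort (· ≤ ·)).length = S.card := Finset.length_sort _
  constructor
  · rw [eList_card]
  · intro k hk hkS
    have hkm : k < S.card := by
      have := hk
      rw [eList_sort S.card t, eList_length] at this
      exact this
    have hval : ((eList S.card t).toFinset.sort (· ≤ ·)).get ⟨k, hk⟩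
        = if k < S.card - t then k + 1 else k + 2 := by
      simp only [List.get_eq_getElem]
      have hk' : k < (eList S.card t).length := by rw [eList_length]; exact hkm
      rw [List.getElem_of_eq (eList_sort S.card t) hk, eList_getElem S.card t hk']
    rw [hval]
    have hSk : k + 1 ≤ (S.sort (· ≤ ·))[k] := by simpa using succ_le_get_sort S hS k hkS
    have hgoal : (if k < S.card - t then k + 1 else k + 2) ≤ (S.sort (· ≤ ·))[k] := by
      split_ifs with h'
      · exact hSk
      · -- need the defect of S at k to be 1
        set d : ℕ → ℕ := fun j => (S.sort (· ≤ ·)).getD j 0 - (j + 1) with hd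
        have h1 : ∀ j < (S.sort (· ≤ ·)).length, d j ≤ 1 := by
          intro j hj
          have := hd1 j hj
          simp only [hd, List.getD_eq_getElem _ 0 hj]
          simpa using this
        have hmono : ∀ i j, i ≤ j → j < (S.sort (· ≤ ·)).length → d i ≤ d j := by
          apply mono_of_adj
          intro i hi1
          have hi : i < (S.sort (· ≤ ·)).length := by omega
          have hs : (S.sort (· ≤ ·))[i] < (S.sort (· ≤ ·))[i + 1] := by
            simpa using sort_strictMono S (show (⟨i, hi⟩ : Fin _) < ⟨i + 1, hi1⟩ from by
              simp [Fin.lt_def])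
          simp only [hd, List.getD_eq_getElem _ 0 hi, List.getD_eq_getElem _ 0 hi1]
          omega
        have hsum : ∑ j ∈ Finset.range (S.sort (· ≤ ·)).length, d j = colRank S :=
          (colRank_eq_sum S hS).symm
        have hdk := mono01 d h1 hmono hkS
        rw [hsum] at hdk
        rw [if_neg (by omega)] at hdk
        simp only [hd, List.getD_eq_getElem _ 0 hkS] at hdk
        omega
    simp only [List.get_eq_getElem]
    exact hgoal

/-- Any column dominated by a column inside `[1,n]` is inside `[1,n]`. -/
lemma colLE_subset_Icc (n : ℕ) (S C : Finset ℕ) (hC : ∀ x ∈ C, 1 ≤ x)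
    (hS : S ⊆ Finset.Icc 1 n) (hle : colLE C S) : C ⊆ Finset.Icc 1 n := by
  intro x hx
  have hxl : x ∈ C.sort (· ≤ ·) := (Finset.mem_sort (· ≤ ·)).mpr hx
  obtain ⟨j, rfl⟩ := List.mem_iff_get.mp hxl
  have hjS : (j : ℕ) < (S.sort (· ≤ ·)).length := by
    have hlen : (C.sort (· ≤ ·)).length = (S.sort (· ≤ ·)).length := by
      simp [Finset.length_sort, hle.1]
    have := j.2; omega
  have h1 := hle.2 j j.2 hjS
  have h2 : (S.sort (· ≤ ·)).get ⟨j, hjS⟩ ∈ S := get_sort_mem S hjS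
  have h3 := (Finset.mem_Icc.mp (hS h2)).2
  have h4 := hC _ (get_sort_mem C j.2)
  refine Finset.mem_Icc.mpr ⟨h4, ?_⟩
  calc (C.sort (· ≤ ·)).get j ≤ (S.sort (· ≤ ·)).get ⟨j, hjS⟩ := by
        have := hle.2 j j.2 hjS
        simpa using this
    _ ≤ n := h3

end Aux

/-- If all positive-rank boxes of `D` lie in a single column `j₀` and have rank exactly 1,
then for each `k = 0, …, rank(D)` there is exactly one diagram `C ≤ D` with `rank(C) = k`;
in particular `#{C : C ≤ D} = rank(D) + 1`. -/
theorem stmt_14 (n : ℕ) (D : Fin n → Finset ℕ) (hD : ∀ j, D j ⊆ Finset.Icc 1 n)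
    (j0 : Fin n)
    (hcol : ∀ j, ∀ i ∈ D j,
      0 < ((Finset.Icc 1 i).filter (fun k => k ∉ D j)).card → j = j0)
    (hrank1 : ∀ i ∈ D j0, ((Finset.Icc 1 i).filter (fun k => k ∉ D j0)).card ≤ 1) :
    (∀ k ≤ diagRank D, ∃! C : Fin n → Finset ℕ,
      (∀ j, C j ⊆ Finset.Icc 1 n) ∧ diagLE C D ∧ diagRank C = k) ∧
    Set.ncard {C : Fin n → Finset ℕ | (∀ j, C j ⊆ Finset.Icc 1 n) ∧ diagLE C D}
      = diagRank D + 1 := by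
  classical
  have hpos : ∀ j, ∀ x ∈ D j, 1 ≤ x := fun j x hx => (Finset.mem_Icc.mp (hD j hx)).1
  -- Columns other than j0 have rank zero
  have hzero : ∀ j, j ≠ j0 → colRank (D j) = 0 := by
    intro j hj
    apply Finset.sum_eq_zero
    intro i hi
    by_contra h
    exact hj (hcol j i hi (Nat.pos_of_ne_zero h))
  set t := colRank (D j0) with htdef
  set m := (D j0).card with hmdef
  -- defect bound for column j0
  have hd1 : ∀ (k : ℕ) (h : k < ((D j0).sort (· ≤ ·)).length),
      ((D j0).sort (· ≤ ·)).get ⟨k, h⟩ - (k + 1) ≤ 1 := by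
    intro k h
    have := boxRank_get (D j0) (hpos j0) h
    rw [← this]
    exact hrank1 _ (get_sort_mem (D j0) h)
  have hdiagD : diagRank D = t :=
    Finset.sum_eq_single_of_mem j0 (Finset.mem_univ _) (fun j _ hj => hzero j hj)
  have htm : t ≤ m := by
    rw [htdef, colRank_eq_sum (D j0) (hpos j0)]
    calc ∑ k ∈ Finset.range ((D j0).sort (· ≤ ·)).length,
          (((D j0).sort (· ≤ ·)).getD k 0 - (k + 1))
        ≤ ∑ k ∈ Finset.range ((D j0).sort (· ≤ ·)).length, 1 := by
          apply Finset.sum_le_sum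
          intro k hk
          have hkS := Finset.mem_range.mp hk
          have := hd1 k hkS
          rw [List.getD_eq_getElem _ 0 hkS]
          simpa using this
      _ = m := by simp [Finset.length_sort, hmdef]
  -- the canonical diagrams
  set F : ℕ → (Fin n → Finset ℕ) :=
    fun k j => if j = j0 then (eList m k).toFinset else D j with hF
  have hFj0 : ∀ k, F k j0 = (eList m k).toFinset := fun k => if_pos rfl
  have hFj : ∀ k j, j ≠ j0 → F k j = D j := fun k j hj => if_neg hj
  -- key existence properties
  have key1 : ∀ k ≤ t, (∀ j, F k j ⊆ Finset.Icc 1 n) ∧ diagLE (F k) D ∧ diagRank (F k) = k := by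
    intro k hk
    have hcolLE : colLE (eList m k).toFinset (D j0) := eList_colLE (D j0) (hpos j0) hd1 hk
    have hsub : ∀ j, F k j ⊆ Finset.Icc 1 n := by
      intro j
      by_cases hj : j = j0
      · rw [hj, hFj0]
        exact colLE_subset_Icc n (D j0) _ (eList_pos m k) (hD j0) hcolLE
      · rw [hFj k j hj]; exact hD j
    have hle : diagLE (F k) D := by
      intro j
      by_cases hj : j = j0
      · rw [hj, hFj0]; exact hcolLE
      · rw [hFj k j hj]; exact colLE_refl (D j)
    refine ⟨hsub, hle, ?_⟩
    rw [diagRank]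
    rw [Finset.sum_eq_single_of_mem j0 (Finset.mem_univ _)
      (fun j _ hj => by rw [hFj k j hj]; exact hzero j hj)]
    rw [hFj0]
    exact eList_colRank m k (le_trans hk htm)
  -- key uniqueness
  have key2 : ∀ (C : Fin n → Finset ℕ),
      (∀ j, C j ⊆ Finset.Icc 1 n) → diagLE C D →
      diagRank C ≤ t ∧ C = F (diagRank C) := by
    intro C hsub hle
    have hCpos : ∀ j, ∀ x ∈ C j, 1 ≤ x := fun j x hx => (Finset.mem_Icc.mp (hsub j hx)).1
    have hother : ∀ j, j ≠ j0 → C j = D j := by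
      intro j hj
      exact eq_of_colLE_rank_zero (D j) (C j) (hpos j) (hCpos j) (hle j) (hzero j hj)
    have hrC : diagRank C = colRank (C j0) := by
      rw [diagRank]
      exact Finset.sum_eq_single_of_mem j0 (Finset.mem_univ _)
        (fun j _ hj => by rw [hother j hj]; exact hzero j hj)
    have hrle : colRank (C j0) ≤ t :=
      colRank_le_of_colLE (D j0) (C j0) (hpos j0) (hCpos j0) (hle j0)
    refine ⟨by rw [hrC]; exact hrle, ?_⟩
    funext j
    by_cases hj : j = j0
    · rw [hj, hFj0]
      apply col_unique (D j0) (C j0) _ (hpos j0) (hCpos j0) (eList_pos m _)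
        (hle j0) (eList_colLE (D j0) (hpos j0) hd1 (by rw [hrC]; exact hrle))
        hd1
      rw [eList_colRank m _ (le_trans (by rw [hrC]; exact hrle) htm), hrC]
    · rw [hFj _ j hj, hother j hj]
  constructor
  · intro k hk
    rw [hdiagD] at hk
    obtain ⟨hsub, hle, hrank⟩ := key1 k hk
    refine ⟨F k, ⟨hsub, hle, hrank⟩, ?_⟩
    rintro C ⟨hsub', hle', hrank'⟩
    have := (key2 C hsub' hle').2
    rw [hrank'] at this
    exact this
  · have hset : {C : Fin n → Finset ℕ | (∀ j, C j ⊆ Finset.Icc 1 n) ∧ diagLE C D}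
        = F '' ↑(Finset.Iic t) := by
      ext C
      simp only [Set.mem_setOf_eq, Set.mem_image, Finset.coe_Iic, Set.mem_Iic]
      constructor
      · rintro ⟨hsub, hle⟩
        obtain ⟨hrle, hCeq⟩ := key2 C hsub hle
        exact ⟨diagRank C, hrle, hCeq.symm⟩
      · rintro ⟨k, hk, rfl⟩
        obtain ⟨hsub, hle, _⟩ := key1 k hk
        exact ⟨hsub, hle⟩
    rw [hset]
    have hinj : Set.InjOn F ↑(Finset.Iic t) := by
      intro a ha b hb hab
      simp only [Finset.coe_Iic, Set.mem_Iic] at ha hb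
      have h1 := (key1 a ha).2.2
      have h2 := (key1 b hb).2.2
      rw [hab] at h1
      omega
    rw [Set.ncard_image_of_injOn hinj, Set.ncard_coe_finset, Nat.card_Iic, hdiagD]
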